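/- For the set functor F(X) = {•} + C × X × X over a linearly ordered set C, the coalgebra s : C* → F(C*) defined by s(ε) = • and s(c·w) = (c, w_{≤c}, w_{>c}) is recursive; consequently, for the algebra m with m(•) = ε and m(c,w,v) = w ⋆ (c·v) there is a unique function q : C* → C* with q = m ∘ Fq ∘ s, namely Quicksort. -/

import Mathlib

/-- The quicksort splitting coalgebra `s : C* → {•} + C × C* × C*`. -/
def qsplit {α : Type*} [LinearOrder α] :
    List α → Unit ⊕ α × List α × List α
  | [] => Sum.inl ()
  | c :: w => Sum.inr (c, w.filter (fun x => x ≤ c), w.filter (fun x => c < x))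

/-- The merge algebra `m : {•} + C × C* × C* → C*`. -/
def qmerge {α : Type*} : Unit ⊕ α × List α × List α → List α
  | Sum.inl _ => []
  | Sum.inr (c, w, v) => w ++ c :: v

/-- Action of the functor `F X = {•} + C × X × X` on a map `h`. -/
def qF {α A B : Type*} (h : A → B) : Unit ⊕ α × A × A → Unit ⊕ α × B × B :=
  Sum.map id (fun p => (p.1, h p.2.1, h p.2.2))

/-- The unique solution, defined by well-founded recursion on length. -/
def qrec {α A : Type*} [LinearOrder α] (a : Unit ⊕ α × A × A → A) : List α → A
  | [] => a (Sum.inl ())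
  | c :: w => a (Sum.inr (c, qrec a (w.filter (fun x => x ≤ c)),
      qrec a (w.filter (fun x => c < x))))
termination_by l => l.length
decreasing_by
  · exact Nat.lt_succ_of_le (by rw [List.length_unattach]; exact (List.length_filter_le _ _).trans List.length_attach.le)
  · exact Nat.lt_succ_of_le (by rw [List.length_unattach]; exact (List.length_filter_le _ _).trans List.length_attach.le)

lemma qrec_spec {α A : Type*} [LinearOrder α] (a : Unit ⊕ α × A × A → A) (w : List α) :
    qrec a w = a (qF (qrec a) (qsplit w)) := by
  cases w with
  | nil => rw [qrec]; rfl
  | cons c w => rw [qrec]; rfl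

lemma qrec_unique {α A : Type*} [LinearOrder α] (a : Unit ⊕ α × A × A → A)
    (h : List α → A) (hh : ∀ w : List α, h w = a (qF h (qsplit w))) :
    h = qrec a := by
  funext w
  obtain ⟨n, hn⟩ : ∃ n, w.length = n := ⟨_, rfl⟩
  induction n using Nat.strong_induction_on generalizing w with
  | _ n ih =>
    cases w with
    | nil => rw [hh, qrec_spec]; rfl
    | cons c w =>
      subst hn
      rw [hh, qrec_spec]
      congr 1
      simp only [qsplit, qF, Sum.map_inr]
      rw [ih _ (by simp [Nat.lt_succ_of_le (List.length_filter_le _ _)]) _ rfl,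
        ih _ (by simp [Nat.lt_succ_of_le (List.length_filter_le _ _)]) _ rfl]

/-- The quicksort coalgebra `s` is recursive for `F X = {•} + C × X × X`;
consequently there is a unique `q : C* → C*` with `q = m ∘ F q ∘ s` (quicksort). -/
theorem qsplit_recursive {α : Type*} [LinearOrder α] :
    (∀ (A : Type*) (a : Unit ⊕ α × A × A → A),
      ∃! h : List α → A, ∀ w : List α, h w = a (qF h (qsplit w))) ∧
    (∃! q : List α → List α, ∀ w : List α, q w = qmerge (qF q (qsplit w))) := by
  constructor
  · intro A a
    exact ⟨qrec a, qrec_spec a, fun h hh => qrec_unique a h hh⟩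
  · exact ⟨qrec qmerge, qrec_spec qmerge, fun h hh => qrec_unique qmerge h hh⟩
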